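/- The permanent of a positive semidefinite Hermitian matrix is a nonnegative real number. In particular, for any vectors α₁,…,α_n in a complex inner product space, the permanent of the Gram matrix G_{jk} = ⟨α_j, α_k⟩ is nonnegative. -/

import Mathlib

open scoped ComplexOrder
open Matrix

open Finset Equiv in
lemma permanent_conjTranspose_mul_self_nonneg {n : ℕ}
    (B : Matrix (Fin n) (Fin n) ℂ) : 0 ≤ (Bᴴ * B).permanent := by
  classical
  set M := Bᴴ * B with hMdef
  have hM : ∀ a b, M a b = ∑ i, (starRingEnd ℂ) (B i a) * B i b := by
    intro a b
    simp [hMdef, Matrix.mul_apply, Matrix.conjTranspose_apply]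
  set S : (Fin n → Fin n) → ℂ := fun f => ∑ σ : Perm (Fin n), ∏ j, B (f j) (σ j) with hS
  have key : (Nat.factorial n : ℂ) * M.permanent
      = ∑ f : Fin n → Fin n, (starRingEnd ℂ) (S f) * S f := by
    have rhs : ∑ f : Fin n → Fin n, (starRingEnd ℂ) (S f) * S f
        = ∑ σ : Perm (Fin n), ∑ τ : Perm (Fin n), ∏ j, M (σ j) (τ j) := by
      have : ∀ f : Fin n → Fin n, (starRingEnd ℂ) (S f) * S f
          = ∑ σ : Perm (Fin n), ∑ τ : Perm (Fin n),
              ∏ j, ((starRingEnd ℂ) (B (f j) (σ j)) * B (f j) (τ j)) := by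
        intro f
        rw [hS, map_sum, Finset.sum_mul]
        refine Finset.sum_congr rfl fun σ _ => ?_
        rw [Finset.mul_sum]
        refine Finset.sum_congr rfl fun τ _ => ?_
        rw [map_prod, ← Finset.prod_mul_distrib]
      rw [Finset.sum_congr rfl fun f _ => this f]
      rw [Finset.sum_comm]
      refine Finset.sum_congr rfl fun σ _ => ?_
      rw [Finset.sum_comm]
      refine Finset.sum_congr rfl fun τ _ => ?_
      rw [← Fintype.piFinset_univ, ← Finset.prod_univ_sum (fun _ : Fin n => (univ : Finset (Fin n)))
        (fun j i => (starRingEnd ℂ) (B i (σ j)) * B i (τ j))]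
      refine Finset.prod_congr rfl fun j _ => ?_
      rw [hM]
    rw [rhs]
    have lhs : ∀ τ : Perm (Fin n),
        ∑ σ : Perm (Fin n), ∏ j, M (σ j) (τ j) = M.permanent := by
      intro τ
      have h1 : ∀ σ : Perm (Fin n),
          ∏ j, M (σ j) (τ j) = ∏ j, M ((σ * τ⁻¹) j) j := by
        intro σ
        rw [← Equiv.prod_comp τ (fun j => M ((σ * τ⁻¹) j) j)]
        simp [Perm.mul_apply]
      rw [Finset.sum_congr rfl fun σ _ => h1 σ]
      exact Fintype.sum_equiv (Equiv.mulRight τ⁻¹) _ _ (fun σ => rfl)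
    rw [Finset.sum_comm, Finset.sum_congr rfl fun τ _ => lhs τ]
    simp [Matrix.permanent, Finset.mul_sum, Finset.card_univ, Fintype.card_perm]
  have hsum : 0 ≤ ∑ f : Fin n → Fin n, (starRingEnd ℂ) (S f) * S f :=
    Finset.sum_nonneg fun f _ => star_mul_self_nonneg (S f)
  have hfac : (0 : ℂ) ≤ ((Nat.factorial n : ℂ))⁻¹ := by
    have h9 : ((Nat.factorial n : ℂ))⁻¹ = Complex.ofReal ((Nat.factorial n : ℝ)⁻¹) := by
      push_cast; ring
    rw [h9, Complex.zero_le_real]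
    positivity
  have hne : (Nat.factorial n : ℂ) ≠ 0 := Nat.cast_ne_zero.mpr (Nat.factorial_ne_zero n)
  have : M.permanent = ((Nat.factorial n : ℂ))⁻¹ *
      ∑ f : Fin n → Fin n, (starRingEnd ℂ) (S f) * S f := by
    rw [← key]
    field_simp
  rw [this]
  exact mul_nonneg hfac hsum

theorem permanent_posSemidef_nonneg {n : ℕ}
    (M : Matrix (Fin n) (Fin n) ℂ) (hM : M.PosSemidef)
    (E : Type*) [NormedAddCommGroup E] [InnerProductSpace ℂ E] (α : Fin n → E) :
    (0 ≤ (M.permanent).re ∧ (M.permanent).im = 0) ∧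
      (0 ≤ ((Matrix.of fun j k => (inner ℂ (α j) (α k) : ℂ)).permanent).re ∧
        ((Matrix.of fun j k => (inner ℂ (α j) (α k) : ℂ)).permanent).im = 0) := by
  have key : ∀ A : Matrix (Fin n) (Fin n) ℂ, A.PosSemidef →
      0 ≤ A.permanent.re ∧ A.permanent.im = 0 := by
    intro A hA
    open scoped MatrixOrder in obtain ⟨B, rfl⟩ := CStarAlgebra.nonneg_iff_eq_star_mul_self.mp hA.nonneg
    have h := permanent_conjTranspose_mul_self_nonneg B
    rw [Complex.le_def] at h
    exact ⟨h.1, h.2.symm⟩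
  have hGram : (Matrix.of fun j k => (inner ℂ (α j) (α k) : ℂ)).PosSemidef := by
    refine Matrix.PosSemidef.of_dotProduct_mulVec_nonneg ?_ ?_
    · ext j k
      simp [Matrix.conjTranspose_apply, inner_conj_symm]
    · intro x
      have : (star x) ⬝ᵥ ((Matrix.of fun j k => (inner ℂ (α j) (α k) : ℂ)) *ᵥ x)
          = (inner ℂ (∑ j, x j • α j) (∑ k, x k • α k) : ℂ) := by
        rw [sum_inner]
        simp only [dotProduct, Matrix.mulVec, dotProduct, Pi.star_apply,
          Matrix.of_apply, inner_sum, inner_smul_left, inner_smul_right]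
        refine Finset.sum_congr rfl fun j _ => ?_
        rw [Finset.mul_sum]
        refine Finset.sum_congr rfl fun k _ => ?_
        rw [starRingEnd_apply]; ring
      rw [this, @inner_self_eq_norm_sq_to_K ℂ]
      have h2 : (0:ℝ) ≤ ‖∑ j, x j • α j‖ ^ 2 := by positivity
      calc (0:ℂ) = ((0:ℝ):ℂ) := by norm_num
        _ ≤ ((‖∑ j, x j • α j‖ ^ 2 : ℝ) : ℂ) := by rw [Complex.real_le_real]; exact h2
        _ = (‖∑ j, x j • α j‖ : ℂ) ^ 2 := by push_cast; ring
  exact ⟨key M hM, key _ hGram⟩
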